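/- Let A be a finite set of candidates with |A| ≥ 3 and let N = {1,…,n} be a finite set of voters. Every Social Choice Function f : 𝒫^n → A that is onto (surjective) and Strategy-Proof is dictatorial, i.e., there exists a voter i such that f(P) is the top-ranked candidate of P_i at every profile P. (Gibbard–Satterthwaite Theorem.) -/

import Mathlib

/-- A voter preference: a strict linear (complete, transitive, antisymmetric) order on `A`. -/
abbrev Pref (A : Type*) := {r : A → A → Prop // IsStrictTotalOrder A r}

/-- Strategy-proofness: no voter can obtain an outcome she strictly prefers (under her
true order) by misreporting. -/
def StrategyProof {A : Type*} {n : ℕ} (f : (Fin n → Pref A) → A) : Prop :=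
  ∀ (i : Fin n) (P : Fin n → Pref A) (Q : Pref A),
    ¬ (P i).1 (f (Function.update P i Q)) (f P)

/-- Dictatorship for a social choice function: some voter's top-ranked candidate is
always chosen. -/
def DictatorialSCF {A : Type*} {n : ℕ} (f : (Fin n → Pref A) → A) : Prop :=
  ∃ i : Fin n, ∀ P : Fin n → Pref A, ∀ b : A, b ≠ f P → (P i).1 (f P) b

set_option linter.unusedSectionVars false
set_option linter.unusedVariables false

namespace GS

variable {A : Type*}

lemma ptri (P : Pref A) (x y : A) : P.1 x y ∨ x = y ∨ P.1 y x := by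
  by_cases h1 : P.1 x y
  · exact Or.inl h1
  by_cases h2 : P.1 y x
  · exact Or.inr (Or.inr h2)
  exact Or.inr (Or.inl (P.2.trichotomous x y h1 h2))

lemma ptrans (P : Pref A) {x y z : A} (h1 : P.1 x y) (h2 : P.1 y z) : P.1 x z :=
  P.2.trans x y z h1 h2

lemma pirrefl (P : Pref A) (x : A) : ¬ P.1 x x := P.2.irrefl x

lemma pasym (P : Pref A) {x y : A} (h1 : P.1 x y) (h2 : P.1 y x) : False :=
  pirrefl P x (ptrans P h1 h2)

lemma presolve (P : Pref A) {x y : A} (h : ¬ P.1 x y) (hne : y ≠ x) : P.1 y x := by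
  rcases ptri P x y with h1 | h1 | h1
  · exact absurd h1 h
  · exact absurd h1.symm hne
  · exact h1

/-- `t` is the most-preferred element of `P`. -/
def IsTop (P : Pref A) (t : A) : Prop := ∀ z, z ≠ t → P.1 t z

lemma top_unique {P : Pref A} {s t : A} (hs : IsTop P s) (ht : IsTop P t) : s = t := by
  by_contra h
  exact pasym P (hs t (Ne.symm h)) (ht s h)

lemma top_eq_of_prop {P : Pref A} {s t : A} (hs : IsTop P s)
    (ht : ∀ b, b ≠ t → P.1 t b) : t = s := top_unique ht hs

lemma exists_top [Finite A] [Nonempty A] (P : Pref A) : ∃ t, IsTop P t := by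
  letI : IsTrans A P.1 := ⟨fun a b c => ptrans P⟩
  letI : IsIrrefl A P.1 := ⟨pirrefl P⟩
  have wf := Finite.wellFounded_of_trans_of_irrefl P.1
  obtain ⟨m, -, hm⟩ := wf.has_min Set.univ ⟨Classical.arbitrary A, trivial⟩
  exact ⟨m, fun z hz => presolve P (hm z trivial) hz.symm⟩

end GS
namespace GS
variable {A : Type*}

section Key
variable [Fintype A] [DecidableEq A]

/-- Rank function: elements of `L` come first (in list order), the rest afterwards. -/
noncomputable def key : List A → A → ℕ
  | [], x => (Fintype.equivFin A x : ℕ)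
  | a :: L, x => if x = a then 0 else key L x + 1

@[simp] lemma key_nil (x : A) : key ([] : List A) x = (Fintype.equivFin A x : ℕ) := rfl

@[simp] lemma key_cons (a : A) (L : List A) (x : A) :
    key (a :: L) x = if x = a then 0 else key L x + 1 := rfl

lemma key_cons_self (a : A) (L : List A) : key (a :: L) a = 0 := by
  simp [key]

lemma key_cons_ne {x a : A} (h : x ≠ a) (L : List A) : key (a :: L) x = key L x + 1 := by
  simp [key, h]

lemma key_inj : ∀ (L : List A), L.Nodup → ∀ {x y : A}, key L x = key L y → x = y := by
  intro L
  induction L with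
  | nil =>
    intro _ x y h
    simpa [key] using (Fintype.equivFin A).injective (Fin.val_injective h)
  | cons a L ih =>
    intro hnd x y h
    by_cases hx : x = a <;> by_cases hy : y = a
    · exact hx.trans hy.symm
    · rw [hx, key_cons_self, key_cons_ne hy] at h; omega
    · rw [hy, key_cons_self, key_cons_ne hx] at h; omega
    · rw [key_cons_ne hx, key_cons_ne hy] at h
      exact ih (List.Nodup.of_cons hnd) (by omega)

/-- The preference putting the (nodup) list `L` on top, in order. -/
def mk (L : List A) (hL : L.Nodup) : Pref A :=
  ⟨fun x y => key L x < key L y,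
   { trichotomous := by
       intro x y
       intro hxy hyx
       exact key_inj L hL (Nat.le_antisymm (Nat.not_lt.mp hyx) (Nat.not_lt.mp hxy))
     irrefl := fun x => Nat.lt_irrefl _
     trans := fun x y z => Nat.lt_trans }⟩

lemma mk_iff {L : List A} {hL : L.Nodup} {x y : A} :
    (mk L hL).1 x y ↔ key L x < key L y := Iff.rfl

def mk1 (a : A) : Pref A := mk [a] (by simp)

def mk2 (a b : A) (h : a ≠ b) : Pref A := mk [a, b] (by simp [h])

def mk3 (a b c : A) (hab : a ≠ b) (hac : a ≠ c) (hbc : b ≠ c) : Pref A :=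
  mk [a, b, c] (by simp [hab, hac, hbc])

lemma mk1_top (a : A) : IsTop (mk1 a) a := by
  intro z hz
  rw [mk1, mk_iff, key_cons_self, key_cons_ne hz]
  omega

lemma mk2_top (a b : A) (h : a ≠ b) : IsTop (mk2 a b h) a := by
  intro z hz
  rw [mk2, mk_iff, key_cons_self, key_cons_ne hz]
  omega

lemma mk3_top (a b c : A) (hab : a ≠ b) (hac : a ≠ c) (hbc : b ≠ c) :
    IsTop (mk3 a b c hab hac hbc) a := by
  intro z hz
  rw [mk3, mk_iff, key_cons_self, key_cons_ne hz]
  omega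

/-- In `mk2 a b`, `b` beats everything outside `{a,b}`. -/
lemma mk2_second {a b : A} (h : a ≠ b) {z : A} (hza : z ≠ a) (hzb : z ≠ b) :
    (mk2 a b h).1 b z := by
  rw [mk2, mk_iff, key_cons_ne (Ne.symm h), key_cons_self, key_cons_ne hza, key_cons_ne hzb]
  omega

/-- In `mk2 a b`, only `a` beats `b`. -/
lemma mk2_lt_second {a b : A} (h : a ≠ b) {w : A} (hw : (mk2 a b h).1 w b) : w = a := by
  by_contra hwa
  rw [mk2, mk_iff, key_cons_ne (Ne.symm h), key_cons_self, key_cons_ne hwa] at hw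
  omega

/-- In `mk2 a b`, anything below `b` is outside `{a,b}`. -/
lemma mk2_gt_second {a b : A} {h : a ≠ b} {z : A} (hz : (mk2 a b h).1 b z) :
    z ≠ a ∧ z ≠ b := by
  rw [mk2, mk_iff, key_cons_ne (Ne.symm h), key_cons_self] at hz
  constructor <;> rintro rfl
  · rw [key_cons_self] at hz; omega
  · rw [key_cons_ne (Ne.symm h), key_cons_self] at hz; omega

/-- In `mk3 a b c`, only `a` beats `b`. -/
lemma mk3_lt_second {a b c : A} {hab hac hbc} {w : A}
    (hw : (mk3 a b c hab hac hbc).1 w b) : w = a := by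
  by_contra hwa
  rw [mk3, mk_iff, key_cons_ne (Ne.symm hab), key_cons_self, key_cons_ne hwa] at hw
  rcases eq_or_ne w b with h | h
  · subst h; omega
  · rw [key_cons_ne h] at hw; omega

/-- In `mk3 a b c`, anything below the third element `c` is outside `{a,b,c}`. -/
lemma mk3_gt_third {a b c : A} {hab hac hbc} {z : A}
    (hz : (mk3 a b c hab hac hbc).1 c z) : z ≠ a ∧ z ≠ b ∧ z ≠ c := by
  rw [mk3, mk_iff, key_cons_ne (Ne.symm hac), key_cons_ne (Ne.symm hbc),
    key_cons_self] at hz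
  refine ⟨?_, ?_, ?_⟩ <;> rintro rfl
  · rw [key_cons_self] at hz; omega
  · rw [key_cons_ne (Ne.symm hab), key_cons_self] at hz; omega
  · rw [key_cons_ne (Ne.symm hac), key_cons_ne (Ne.symm hbc), key_cons_self] at hz; omega

/-- In `mk3 a b c`, anything below the second element `b` is outside `{a,b}`. -/
lemma mk3_gt_second {a b c : A} {hab hac hbc} {z : A}
    (hz : (mk3 a b c hab hac hbc).1 b z) : z ≠ a ∧ z ≠ b := by
  rw [mk3, mk_iff, key_cons_ne (Ne.symm hab), key_cons_self] at hz
  constructor <;> rintro rfl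
  · rw [key_cons_self] at hz; omega
  · rw [key_cons_ne (Ne.symm hab), key_cons_self] at hz; omega

/-- In `mk3 a b c`, `b` beats everything outside `{a,b}`. -/
lemma mk3_second {a b c : A} {hab hac hbc : _} {z : A} (hza : z ≠ a) (hzb : z ≠ b) :
    (mk3 a b c hab hac hbc).1 b z := by
  rw [mk3, mk_iff, key_cons_ne (Ne.symm hab), key_cons_self, key_cons_ne hza, key_cons_ne hzb]
  rcases eq_or_ne z c with h | h
  · subst h; rw [key_cons_self]; omega
  · rw [key_cons_ne h]; omega

/-- In `mk3 a b c`, `c` beats everything outside `{a,b,c}`. -/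
lemma mk3_third {a b c : A} {hab hac hbc : _} {z : A} (hza : z ≠ a) (hzb : z ≠ b)
    (hzc : z ≠ c) : (mk3 a b c hab hac hbc).1 c z := by
  rw [mk3, mk_iff, key_cons_ne (Ne.symm hac), key_cons_ne (Ne.symm hbc), key_cons_self,
    key_cons_ne hza, key_cons_ne hzb, key_cons_ne hzc]
  omega

end Key
end GS
namespace GS
variable {A : Type*}

open Function

section SP
variable {n : ℕ} {f : (Fin n → Pref A) → A}

lemma sp_new (hSP : StrategyProof f) (P : Fin n → Pref A) (i : Fin n) (Q : Pref A) :
    ¬ (P i).1 (f (update P i Q)) (f P) := hSP i P Q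

lemma sp_old (hSP : StrategyProof f) (P : Fin n → Pref A) (i : Fin n) (Q : Pref A) :
    ¬ Q.1 (f P) (f (update P i Q)) := by
  have h := hSP i (update P i Q) (P i)
  rwa [update_idem, update_eq_self, update_self] at h

/-- One-voter Maskin monotonicity step. -/
lemma mono_update (hSP : StrategyProof f) {P : Fin n → Pref A} {x : A} (hx : f P = x)
    {i : Fin n} {Q : Pref A} (h : ∀ z, (P i).1 x z → Q.1 x z) :
    f (update P i Q) = x := by
  by_contra hne
  have h1 : (P i).1 x (f (update P i Q)) := by
    refine presolve _ ?_ (Ne.symm hne)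
    rw [← hx]; exact sp_new hSP P i Q
  have h2 := h _ h1
  rw [← hx] at h2
  exact sp_old hSP P i Q h2

/-- Hybrid profile used for passing from `P` to `P'` one voter at a time. -/
def mix (P P' : Fin n → Pref A) (k : ℕ) : Fin n → Pref A :=
  fun i => if (i : ℕ) < k then P' i else P i

lemma mix_zero (P P' : Fin n → Pref A) : mix P P' 0 = P := by
  funext i; simp [mix]

lemma mix_last (P P' : Fin n → Pref A) : mix P P' n = P' := by
  funext i; simp [mix, i.isLt]

lemma mix_succ_lt (P P' : Fin n → Pref A) {k : ℕ} (hk : k < n) :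
    mix P P' (k + 1) = update (mix P P' k) ⟨k, hk⟩ (P' ⟨k, hk⟩) := by
  funext i
  rw [update_apply]
  by_cases h : i = ⟨k, hk⟩
  · subst h; simp [mix]
  · have hv : (i : ℕ) ≠ k := fun hc => h (Fin.ext hc)
    rw [if_neg h]
    simp only [mix]
    by_cases h2 : (i : ℕ) < k
    · rw [if_pos h2, if_pos (by omega)]
    · rw [if_neg h2, if_neg (by omega)]

lemma mix_succ_ge (P P' : Fin n → Pref A) {k : ℕ} (hk : ¬ k < n) :
    mix P P' (k + 1) = mix P P' k := by
  funext i
  have := i.isLt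
  simp only [mix]
  rw [if_pos (by omega), if_pos (by omega)]

/-- Maskin monotonicity: if `x` wins at `P` and `x`'s position (weakly) improves
for all voters, `x` still wins. -/
lemma mono (hSP : StrategyProof f) {P P' : Fin n → Pref A} {x : A} (hx : f P = x)
    (h : ∀ i z, (P i).1 x z → (P' i).1 x z) : f P' = x := by
  have key : ∀ k, f (mix P P' k) = x := by
    intro k
    induction k with
    | zero => rw [mix_zero]; exact hx
    | succ k ih =>
      by_cases hk : k < n
      · rw [mix_succ_lt P P' hk]
        refine mono_update hSP ih ?_
        intro z hz
        have : mix P P' k ⟨k, hk⟩ = P ⟨k, hk⟩ := by simp [mix]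
        rw [this] at hz
        exact h _ _ hz
      · rw [mix_succ_ge P P' hk]; exact ih
  have := key n
  rwa [mix_last] at this

/-- Pareto/unanimity: a common top wins. -/
lemma pareto (hf : Function.Surjective f) (hSP : StrategyProof f)
    {P : Fin n → Pref A} {x : A} (h : ∀ i, IsTop (P i) x) : f P = x := by
  obtain ⟨P₀, hP₀⟩ := hf x
  refine mono hSP hP₀ ?_
  intro i z hz
  have hzx : z ≠ x := fun hc => pirrefl _ x (hc ▸ hz)
  exact h i z hzx

end SP
end GS
namespace GS
variable {A : Type*}

open Function

section Two
variable [Fintype A] [DecidableEq A]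

lemma upd0 (p p' q : Pref A) : update ![p, q] 0 p' = ![p', q] := by
  funext i
  fin_cases i <;> simp

lemma upd1 (p q q' : Pref A) : update ![p, q] 1 q' = ![p, q'] := by
  funext i
  fin_cases i <;> simp [Function.update_apply]

variable {f : (Fin 2 → Pref A) → A}

/-- The outcome is at least as good (for voter 0) as voter 1's top. -/
lemma star0 (hf : Function.Surjective f) (hSP : StrategyProof f)
    (p q : Pref A) {t : A} (ht : IsTop q t) :
    f ![p, q] = t ∨ p.1 (f ![p, q]) t := by
  have hqq : f ![q, q] = t := by
    refine pareto hf hSP ?_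
    intro i; fin_cases i <;> simpa
  have h := sp_new hSP ![p, q] 0 q
  rw [upd0, hqq] at h
  simp only [Matrix.cons_val_zero] at h
  rcases eq_or_ne (f ![p, q]) t with h1 | h1
  · exact Or.inl h1
  · exact Or.inr (presolve p h h1)

lemma star1 (hf : Function.Surjective f) (hSP : StrategyProof f)
    (p q : Pref A) {t : A} (ht : IsTop p t) :
    f ![p, q] = t ∨ q.1 (f ![p, q]) t := by
  have hpp : f ![p, p] = t := by
    refine pareto hf hSP ?_
    intro i; fin_cases i <;> simpa
  have h := sp_new hSP ![p, q] 1 p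
  rw [upd1, hpp] at h
  simp only [Matrix.cons_val_one, Matrix.head_cons] at h
  rcases eq_or_ne (f ![p, q]) t with h1 | h1
  · exact Or.inl h1
  · exact Or.inr (presolve q h h1)

/-- Voter 0 wins the head-to-head on the ordered pair `(a,b)`. -/
def dwin (f : (Fin 2 → Pref A) → A) (a b : A) (h : a ≠ b) : Prop :=
  f ![mk2 a b h, mk2 b a h.symm] = a

lemma dichot (hf : Function.Surjective f) (hSP : StrategyProof f)
    {a b : A} (h : a ≠ b) :
    dwin f a b h ∨ f ![mk2 a b h, mk2 b a h.symm] = b := by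
  rcases star0 hf hSP (mk2 a b h) (mk2 b a h.symm) (mk2_top b a h.symm) with h1 | h1
  · exact Or.inr h1
  · exact Or.inl (mk2_lt_second h h1)

end Two
end GS
namespace GS
variable {A : Type*}

open Function

section Core
variable [Fintype A] [DecidableEq A]
variable {f : (Fin 2 → Pref A) → A}

lemma S1 (hf : Function.Surjective f) (hSP : StrategyProof f) {a b c : A}
    (hab : a ≠ b) (hac : a ≠ c) (hbc : b ≠ c) (hd : dwin f a b hab) :
    dwin f a c hac := by
  rcases dichot hf hSP hac with h | hc
  · exact h
  exfalso
  have hNmem : f ![mk3 a b c hab hac hbc, mk3 b c a hbc (Ne.symm hab) (Ne.symm hac)] = a ∨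
      f ![mk3 a b c hab hac hbc, mk3 b c a hbc (Ne.symm hab) (Ne.symm hac)] = b := by
    rcases star0 hf hSP _ _ (mk3_top b c a hbc (Ne.symm hab) (Ne.symm hac)) with h | h
    · exact Or.inr h
    · exact Or.inl (mk3_lt_second h)
  rcases hNmem with hNa | hNb
  · -- outcome a at N; transfer both a and c to profile S, contradiction
    have hSa : f ![mk3 a c b hac hab (Ne.symm hbc), mk3 c a b (Ne.symm hac) (Ne.symm hbc) hab]
        = a := by
      refine mono hSP hNa ?_
      intro i z hz
      fin_cases i <;>
        simp only [Fin.mk_zero, Fin.mk_one, Fin.isValue, Matrix.cons_val_zero, Matrix.cons_val_one, Matrix.head_cons] at hz ⊢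
      · have hza : z ≠ a := fun h => pirrefl _ _ (h ▸ hz)
        exact mk3_top a c b hac hab (Ne.symm hbc) z hza
      · have h3 := mk3_gt_third hz
        exact mk3_second h3.2.1 h3.2.2
    have hSc : f ![mk3 a c b hac hab (Ne.symm hbc), mk3 c a b (Ne.symm hac) (Ne.symm hbc) hab]
        = c := by
      refine mono hSP hc ?_
      intro i z hz
      fin_cases i <;>
        simp only [Fin.mk_zero, Fin.mk_one, Fin.isValue, Matrix.cons_val_zero, Matrix.cons_val_one, Matrix.head_cons] at hz ⊢
      · have h2 := mk2_gt_second hz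
        exact mk3_second h2.1 h2.2
      · have hzc : z ≠ c := fun h => pirrefl _ _ (h ▸ hz)
        exact mk3_top c a b (Ne.symm hac) (Ne.symm hbc) hab z hzc
    exact hac (hSa.symm.trans hSc)
  · -- outcome b at N; transfer to the (a,b) head-to-head, contradicting hd
    have hRb : f ![mk2 a b hab, mk2 b a hab.symm] = b := by
      refine mono hSP hNb ?_
      intro i z hz
      fin_cases i <;>
        simp only [Fin.mk_zero, Fin.mk_one, Fin.isValue, Matrix.cons_val_zero, Matrix.cons_val_one, Matrix.head_cons] at hz ⊢
      · have h2 := mk3_gt_second hz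
        exact mk2_second hab h2.1 h2.2
      · have hzb : z ≠ b := fun h => pirrefl _ _ (h ▸ hz)
        exact mk2_top b a hab.symm z hzb
    exact hab (hd.symm.trans hRb)

end Core
end GS
namespace GS
variable {A : Type*}

open Function

section Swap
variable {f : (Fin 2 → Pref A) → A}

/-- The same SCF with the two voters exchanged. -/
def fswap (f : (Fin 2 → Pref A) → A) : (Fin 2 → Pref A) → A :=
  fun P => f ![P 1, P 0]

lemma eta2 (P : Fin 2 → Pref A) : ![P 0, P 1] = P := by
  funext i; fin_cases i <;> simp

lemma fswap_eval (p q : Pref A) : fswap f ![p, q] = f ![q, p] := by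
  simp [fswap]

lemma fswap_surj (hf : Function.Surjective f) : Function.Surjective (fswap f) := by
  intro a
  obtain ⟨P, hP⟩ := hf a
  refine ⟨![P 1, P 0], ?_⟩
  rw [fswap, Matrix.cons_val_one, Matrix.cons_val_zero, Matrix.cons_val_zero, eta2, hP]

lemma fswap_SP (hSP : StrategyProof f) : StrategyProof (fswap f) := by
  intro i P Q
  have h10 : ((1 : Fin 2) : Fin 2) ≠ 0 := by decide
  fin_cases i
  · have e1 : fswap f (update P 0 Q) = f (update ![P 1, P 0] 1 Q) := by
      rw [fswap]
      congr 1
      funext k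
      fin_cases k <;> simp [Function.update_apply]
    have h := hSP 1 ![P 1, P 0] Q
    rw [← e1] at h
    simpa [fswap] using h
  · have e1 : fswap f (update P 1 Q) = f (update ![P 1, P 0] 0 Q) := by
      rw [fswap]
      congr 1
      funext k
      fin_cases k <;> simp [Function.update_apply]
    have h := hSP 0 ![P 1, P 0] Q
    rw [← e1] at h
    simpa [fswap] using h

end Swap

section Main2
variable [Fintype A] [DecidableEq A]

lemma exists_third (hA : 3 ≤ Fintype.card A) (x y : A) : ∃ c, c ≠ x ∧ c ≠ y := by
  by_contra h
  push_neg at h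
  have hsub : (Finset.univ : Finset A) ⊆ {x, y} := by
    intro c _
    by_cases hc : c = x
    · simp [hc]
    · simp [h c hc]
  have h2 := Finset.card_le_card hsub
  rw [Finset.card_univ] at h2
  have h3 : ({x, y} : Finset A).card ≤ 2 :=
    (Finset.card_insert_le _ _).trans (by simp)
  omega

variable {f : (Fin 2 → Pref A) → A}

lemma not_dwin (hf : Function.Surjective f) (hSP : StrategyProof f) {x y : A}
    (h : x ≠ y) (hnd : ¬ dwin f x y h) : dwin (fswap f) y x h.symm := by
  rcases dichot hf hSP h with h1 | h1
  · exact absurd h1 hnd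
  · rw [dwin, fswap_eval]
    exact h1

/-- If voter 0 wins some head-to-head, voter 0 wins all of them. -/
lemma dwin_all (hA : 3 ≤ Fintype.card A) (hf : Function.Surjective f)
    (hSP : StrategyProof f) {a b : A} (hab : a ≠ b) (hd : dwin f a b hab) :
    ∀ x y (hxy : x ≠ y), dwin f x y hxy := by
  have hswf := fswap_surj hf
  have hswSP := fswap_SP hSP
  -- voter 0 wins (a, y) for every y ≠ a
  have d_a : ∀ y (hay : a ≠ y), dwin f a y hay := by
    intro y hay
    rcases eq_or_ne y b with rfl | hyb
    · exact hd
    · exact S1 hf hSP hab hay (Ne.symm hyb) hd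
  -- voter 0 wins (x, b) for every x ≠ b
  have d_b : ∀ x (hxb : x ≠ b), dwin f x b hxb := by
    intro x hxb
    rcases eq_or_ne x a with rfl | hxa
    · exact hd
    · by_contra hnd
      have h1 := not_dwin hf hSP hxb hnd
      have h2 := S1 hswf hswSP hxb.symm (Ne.symm hab) hxa h1
      rw [dwin, fswap_eval] at h2
      exact hab (hd.symm.trans h2)
  intro x y hxy
  rcases eq_or_ne y b with rfl | hyb
  · exact d_b x hxy
  rcases eq_or_ne x a with rfl | hxa
  · exact d_a y hxy
  rcases eq_or_ne x b with rfl | hxb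
  · -- x = b : want dwin f b y
    by_contra hnd
    have h1 := not_dwin hf hSP hxy hnd
    rcases eq_or_ne y a with rfl | hya
    · -- y = a (now renamed): escalate to a third element
      obtain ⟨c, hcy, hcb⟩ := exists_third hA y x
      have h2 := S1 hswf hswSP hxy.symm hcy.symm hcb.symm h1
      rw [dwin, fswap_eval] at h2
      -- h2 : f ![mk2 c y, mk2 y c] = y, but voter 0 wins (c,y)
      have h3 := S1 hf hSP hcb hcy hxy (d_b c hcb)
      exact hcy (h3.symm.trans h2)
    · have h2 := S1 hswf hswSP hxy.symm hya (Ne.symm hab) h1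
      rw [dwin, fswap_eval] at h2
      exact hya (h2.symm.trans (d_a y hya.symm))
  · have h3 := d_b x hxb
    exact S1 hf hSP hxb hxy (Ne.symm hyb) h3

/-- If voter 0 wins some head-to-head, voter 0 is a dictator. -/
lemma main2 (hA : 3 ≤ Fintype.card A) (hf : Function.Surjective f)
    (hSP : StrategyProof f) {a b : A} (hab : a ≠ b) (hd : dwin f a b hab) :
    ∀ P : Fin 2 → Pref A, ∀ z : A, z ≠ f P → (P 0).1 (f P) z := by
  have hne : Nonempty A := Fintype.card_pos_iff.mp (by omega)
  have hall := dwin_all hA hf hSP hab hd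
  intro P z hz
  obtain ⟨t, ht⟩ := exists_top (P 0)
  have hft : f P = t := by
    by_contra hyt
    set y := f P with hy
    have hmono : f ![mk2 t y (Ne.symm hyt), mk2 y t hyt] = y := by
      refine mono hSP hy.symm ?_
      intro i w hw
      fin_cases i <;>
        simp only [Fin.mk_zero, Fin.mk_one, Fin.isValue, Matrix.cons_val_zero,
          Matrix.cons_val_one, Matrix.head_cons] at hw ⊢
      · have hwy : w ≠ y := fun h => pirrefl _ _ (h ▸ hw)
        have hwt : w ≠ t := by
          rintro rfl
          exact pasym (P 0) hw (ht y hyt)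
        exact mk2_second (Ne.symm hyt) hwt hwy
      · have hwy : w ≠ y := fun h => pirrefl _ _ (h ▸ hw)
        exact mk2_top y t hyt w hwy
    exact hyt (((hall t y (Ne.symm hyt)).symm.trans hmono).symm)
  rw [hft]
  exact ht z (fun h => hz (h.trans hft.symm))

/-- The Gibbard–Satterthwaite theorem for exactly two voters. -/
lemma gs_two (hA : 3 ≤ Fintype.card A) (f : (Fin 2 → Pref A) → A)
    (hf : Function.Surjective f) (hSP : StrategyProof f) : DictatorialSCF f := by
  obtain ⟨a, b, hab⟩ := Fintype.exists_pair_of_one_lt_card (α := A) (by omega)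
  rcases dichot hf hSP hab with hd | hd
  · exact ⟨0, main2 hA hf hSP hab hd⟩
  · have hd' : dwin (fswap f) b a hab.symm := by rw [dwin, fswap_eval]; exact hd
    have hm := main2 hA (fswap_surj hf) (fswap_SP hSP) hab.symm hd'
    refine ⟨1, ?_⟩
    intro P z hz
    have he : fswap f ![P 1, P 0] = f P := by
      rw [fswap_eval, eta2]
    have := hm ![P 1, P 0] z (by rwa [he])
    rwa [Matrix.cons_val_zero, he] at this
end Main2
end GS
namespace GS
variable {A : Type*}

open Function

lemma fin_ne {N : ℕ} {a b : Fin N} (h : (a : ℕ) ≠ (b : ℕ)) : a ≠ b :=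
  fun hc => h (congrArg Fin.val hc)

lemma exists_flip (p : ℕ → Prop) : ∀ N, ¬ p 0 → p N → ∃ k, k < N ∧ ¬ p k ∧ p (k + 1) := by
  intro N
  induction N with
  | zero => intro h0 hN; exact absurd hN h0
  | succ N ih =>
    intro h0 hN
    by_cases hpN : p N
    · obtain ⟨k, hk, h1, h2⟩ := ih h0 hpN
      exact ⟨k, by omega, h1, h2⟩
    · exact ⟨N, by omega, hpN, hN⟩

section Small
variable [Fintype A] [DecidableEq A]

lemma gs_zero (hA : 3 ≤ Fintype.card A) (f : (Fin 0 → Pref A) → A)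
    (hf : Function.Surjective f) : DictatorialSCF f := by
  exfalso
  obtain ⟨a, b, hab⟩ := Fintype.exists_pair_of_one_lt_card (α := A) (by omega)
  obtain ⟨Pa, ha⟩ := hf a
  obtain ⟨Pb, hb⟩ := hf b
  have : Pa = Pb := funext fun i => i.elim0
  exact hab (ha ▸ hb ▸ this ▸ rfl)

lemma gs_one (hA : 3 ≤ Fintype.card A) (f : (Fin 1 → Pref A) → A)
    (hf : Function.Surjective f) (hSP : StrategyProof f) : DictatorialSCF f := by
  have hne : Nonempty A := Fintype.card_pos_iff.mp (by omega)
  refine ⟨0, ?_⟩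
  intro P z hz
  obtain ⟨t, ht⟩ := exists_top (P 0)
  obtain ⟨P', hP'⟩ := hf t
  have hupd : update P 0 (P' 0) = P' := by
    funext i
    rw [Fin.eq_zero i, update_self]
  have h := sp_new hSP P 0 (P' 0)
  rw [hupd, hP'] at h
  have hfP : f P = t := by
    by_contra hne2
    exact h (ht (f P) hne2)
  rw [hfP]
  exact ht z (fun hc => hz (hc.trans hfP.symm))

end Small

end GS
namespace GS
variable {A : Type*}

open Function

section Step
variable [Fintype A] [DecidableEq A] {m : ℕ}

lemma fin_mk_eq {N a : ℕ} {k : Fin N} (h : (k : ℕ) = a) (ha : a < N) : k = ⟨a, ha⟩ :=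
  Fin.ext h

lemma fin_mk_ne {N a : ℕ} {k : Fin N} (h : (k : ℕ) ≠ a) (ha : a < N) : k ≠ ⟨a, ha⟩ :=
  fun hc => h (congrArg Fin.val hc)

/-- collapse: voters 0 and 1 of `Fin (m+1)` both map to voter 0 of `Fin m`. -/
def cl (hm : 2 ≤ m) : Fin (m + 1) → Fin m := fun k => ⟨k.val - 1, by omega⟩

lemma cl_val (hm : 2 ≤ m) (k : Fin (m + 1)) : ((cl hm k) : ℕ) = (k : ℕ) - 1 := rfl

/-- the cloned SCF on `m` voters. -/
def clone (hm : 2 ≤ m) (f : (Fin (m + 1) → Pref A) → A) : (Fin m → Pref A) → A :=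
  fun P => f (fun k => P (cl hm k))

lemma clone_surj (hm : 2 ≤ m) (f : (Fin (m + 1) → Pref A) → A)
    (hf : Function.Surjective f) (hSP : StrategyProof f) :
    Function.Surjective (clone hm f) := by
  intro a
  exact ⟨fun _ => mk1 a, pareto hf hSP (fun i => mk1_top a)⟩

lemma clone_SP (hm : 2 ≤ m) (f : (Fin (m + 1) → Pref A) → A)
    (hSP : StrategyProof f) : StrategyProof (clone hm f) := by
  intro i P Q
  by_cases hiz : (i : ℕ) = 0
  · have e1 : (fun k => (update P i Q) (cl hm k)) =
        update (update (fun k => P (cl hm k)) ⟨0, by omega⟩ Q) ⟨1, by omega⟩ Q := by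
      funext k
      rw [update_apply, update_apply, update_apply]
      by_cases hk : (k : ℕ) ≤ 1
      · have hcki : cl hm k = i := Fin.ext (by rw [cl_val]; omega)
        rw [if_pos hcki]
        by_cases h1 : (k : ℕ) = 1
        · rw [if_pos (fin_mk_eq h1 (by omega))]
        · rw [if_neg (fin_mk_ne h1 (by omega)),
            if_pos (fin_mk_eq (by omega) (by omega))]
      · have hcki : cl hm k ≠ i := fin_ne (by rw [cl_val]; omega)
        rw [if_neg hcki, if_neg (fin_mk_ne (by omega) (by omega)),
          if_neg (fin_mk_ne (by omega) (by omega))]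
    have hA1i0 : P (cl hm ⟨0, by omega⟩) = P i := by
      congr 1
      exact Fin.ext (by rw [cl_val, Fin.val_mk]; try omega)
    have hA2i1 : update (fun k => P (cl hm k)) (⟨0, by omega⟩ : Fin (m + 1)) Q
        ⟨1, by omega⟩ = P i := by
      rw [update_apply, if_neg (fin_mk_ne (a := 0) (by rw [Fin.val_mk]; omega) (by omega))]
      show P (cl hm ⟨1, by omega⟩) = P i
      congr 1
      exact Fin.ext (by rw [cl_val, Fin.val_mk]; try omega)
    have np1 := hSP ⟨0, by omega⟩ (fun k => P (cl hm k)) Q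
    have np2 := hSP ⟨1, by omega⟩
      (update (fun k => P (cl hm k)) ⟨0, by omega⟩ Q) Q
    rw [hA1i0] at np1
    rw [hA2i1] at np2
    show ¬ (P i).1 (f (fun k => (update P i Q) (cl hm k))) (f (fun k => P (cl hm k)))
    rw [e1]
    intro hcon
    rcases ptri (P i) (f (update (fun k => P (cl hm k)) ⟨0, by omega⟩ Q))
        (f (fun k => P (cl hm k))) with h | h | h
    · exact np1 h
    · rw [← h] at hcon; exact np2 hcon
    · exact np2 (ptrans _ hcon h)
  · have e1 : (fun k => (update P i Q) (cl hm k)) =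
        update (fun k => P (cl hm k)) ⟨(i : ℕ) + 1, by omega⟩ Q := by
      funext k
      rw [update_apply, update_apply]
      by_cases hk : (k : ℕ) = (i : ℕ) + 1
      · have : cl hm k = i := Fin.ext (by rw [cl_val]; omega)
        rw [if_pos this, if_pos (fin_mk_eq hk (by omega))]
      · have : cl hm k ≠ i := fin_ne (by rw [cl_val]; omega)
        rw [if_neg this, if_neg (fin_mk_ne hk (by omega))]
    have np := hSP ⟨(i : ℕ) + 1, by omega⟩ (fun k => P (cl hm k)) Q
    have hent : P (cl hm ⟨(i : ℕ) + 1, by omega⟩) = P i := by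
      have hcc : cl hm ⟨(i : ℕ) + 1, by omega⟩ = i :=
        Fin.ext (by rw [cl_val, Fin.val_mk]; try omega)
      rw [hcc]
    rw [hent] at np
    show ¬ (P i).1 (f (fun k => (update P i Q) (cl hm k))) (f (fun k => P (cl hm k)))
    rw [e1]
    exact np

/-- the case where the dictator of the clone is an uncloned voter. -/
lemma gs_step_other (hA : 3 ≤ Fintype.card A) (hm : 2 ≤ m)
    (f : (Fin (m + 1) → Pref A) → A) (hf : Function.Surjective f)
    (hSP : StrategyProof f) (j : Fin m) (hjz : (j : ℕ) ≠ 0)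
    (hj : ∀ P z, z ≠ clone hm f P → (P j).1 (clone hm f P) z) : DictatorialSCF f := by
  refine ⟨⟨(j : ℕ) + 1, by omega⟩, ?_⟩
  intro S z hz
  have hDc : ∀ p : Pref A,
      (fun k => (fun t : Fin m => if (t : ℕ) = 0 then p else S ⟨(t : ℕ) + 1, by omega⟩)
        (cl hm k)) = (fun k : Fin (m + 1) => if (k : ℕ) ≤ 1 then p else S k) := by
    intro p
    funext k
    show (if ((cl hm k : Fin m) : ℕ) = 0 then p else S ⟨((cl hm k : Fin m) : ℕ) + 1, by omega⟩)
        = _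
    by_cases h0 : (k : ℕ) ≤ 1
    · rw [if_pos (show ((cl hm k : Fin m) : ℕ) = 0 by rw [cl_val]; omega), if_pos h0]
    · rw [if_neg (show ¬ ((cl hm k : Fin m) : ℕ) = 0 by rw [cl_val]; omega), if_neg h0]
      congr 1
      exact Fin.ext (by rw [Fin.val_mk, cl_val]; omega)
  have htop : ∀ p : Pref A,
      IsTop (S ⟨(j : ℕ) + 1, by omega⟩)
        (f (fun k : Fin (m + 1) => if (k : ℕ) ≤ 1 then p else S k)) := by
    intro p z' hz'
    have hgp : clone hm f
        (fun t : Fin m => if (t : ℕ) = 0 then p else S ⟨(t : ℕ) + 1, by omega⟩) =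
        f (fun k : Fin (m + 1) => if (k : ℕ) ≤ 1 then p else S k) := by
      exact congrArg f (hDc p)
    have h := hj (fun t : Fin m => if (t : ℕ) = 0 then p else S ⟨(t : ℕ) + 1, by omega⟩)
      z' (by rw [hgp]; exact hz')
    rw [hgp] at h
    have hPj : (fun t : Fin m => if (t : ℕ) = 0 then p else S ⟨(t : ℕ) + 1, by omega⟩) j
        = S ⟨(j : ℕ) + 1, by omega⟩ := by
      show (if (j : ℕ) = 0 then p else S ⟨(j : ℕ) + 1, by omega⟩) = _
      rw [if_neg hjz]
    rwa [if_neg hjz] at h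
  set a := f (fun k : Fin (m + 1) => if (k : ℕ) ≤ 1 then S ⟨1, by omega⟩ else S k) with ha
  have hconst : ∀ p, f (fun k : Fin (m + 1) => if (k : ℕ) ≤ 1 then p else S k) = a :=
    fun p => top_unique (htop p) (htop (S ⟨1, by omega⟩))
  have hDa : (fun k : Fin (m + 1) => if (k : ℕ) ≤ 1 then S ⟨1, by omega⟩ else S k) =
      update S ⟨0, by omega⟩ (S ⟨1, by omega⟩) := by
    funext k
    rw [update_apply]
    by_cases h0 : (k : ℕ) = 0
    · rw [if_pos (by omega), if_pos (fin_mk_eq h0 (by omega))]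
    · rw [if_neg (fin_mk_ne h0 (by omega))]
      by_cases h1 : (k : ℕ) = 1
      · rw [if_pos (by omega)]
        congr 1
        exact (fin_mk_eq h1 (by omega)).symm
      · rw [if_neg (by omega)]
  have hDb : (fun k : Fin (m + 1) => if (k : ℕ) ≤ 1 then S ⟨0, by omega⟩ else S k) =
      update S ⟨1, by omega⟩ (S ⟨0, by omega⟩) := by
    funext k
    rw [update_apply]
    by_cases h1 : (k : ℕ) = 1
    · rw [if_pos (by omega), if_pos (fin_mk_eq h1 (by omega))]
    · rw [if_neg (fin_mk_ne h1 (by omega))]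
      by_cases h0 : (k : ℕ) = 0
      · rw [if_pos (by omega)]
        congr 1
        exact (fin_mk_eq h0 (by omega)).symm
      · rw [if_neg (by omega)]
  have np1 := hSP ⟨1, by omega⟩ S (S ⟨0, by omega⟩)
  rw [← hDb, hconst] at np1
  have np2 := hSP ⟨0, by omega⟩ (update S ⟨0, by omega⟩ (S ⟨1, by omega⟩)) (S ⟨0, by omega⟩)
  rw [update_idem, update_eq_self, update_self, ← hDa, hconst] at np2
  have hfS : f S = a := by
    rcases ptri (S ⟨1, by omega⟩) (f S) a with h | h | h
    · exact absurd h np2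
    · exact h
    · exact absurd h np1
  rw [hfS]
  exact htop (S ⟨1, by omega⟩) z (fun hc => hz (hc.trans hfS.symm))

end Step
end GS
namespace GS
variable {A : Type*}

open Function

section Merge
variable [Fintype A] [DecidableEq A] {m : ℕ}

/-- Embed a two-voter profile as voters 0,1 of an `(m+1)`-voter profile on top of `T`. -/
def embq (q : Fin 2 → Pref A) (T : Fin (m + 1) → Pref A) : Fin (m + 1) → Pref A :=
  fun k => if (k : ℕ) = 0 then q 0 else if (k : ℕ) = 1 then q 1 else T k

lemma embq_apply (q : Fin 2 → Pref A) (T : Fin (m + 1) → Pref A) (k : Fin (m + 1)) :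
    embq q T k = if (k : ℕ) = 0 then q 0 else if (k : ℕ) = 1 then q 1 else T k := rfl

lemma mix_apply {n : ℕ} (P P' : Fin n → Pref A) (s : ℕ) (i : Fin n) :
    mix P P' s i = if (i : ℕ) < s then P' i else P i := rfl

lemma embq_SP (hm : 2 ≤ m) (f : (Fin (m + 1) → Pref A) → A) (hSP : StrategyProof f)
    (T : Fin (m + 1) → Pref A) : StrategyProof (fun q => f (embq q T)) := by
  intro v q Q
  have hv : (v : ℕ) = 0 ∨ (v : ℕ) = 1 := by omega
  rcases hv with hv | hv
  · have hv0 : v = 0 := Fin.ext hv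
    subst hv0
    have e1 : embq (update q 0 Q) T = update (embq q T) ⟨0, by omega⟩ Q := by
      funext k
      rw [embq_apply]
      by_cases h0 : (k : ℕ) = 0
      · rw [if_pos h0, update_self,
          fin_mk_eq (a := 0) h0 (by omega), update_self]
      · rw [if_neg h0, update_of_ne (fin_mk_ne (a := 0) h0 (by omega)), embq_apply,
          if_neg h0]
        by_cases h1 : (k : ℕ) = 1
        · rw [if_pos h1, if_pos h1, update_of_ne (by decide : (1 : Fin 2) ≠ 0)]
        · rw [if_neg h1, if_neg h1]
    have np := hSP ⟨0, by omega⟩ (embq q T) Q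
    have hent : embq q T ⟨0, by omega⟩ = q 0 := by
      rw [embq_apply, if_pos (by rw [Fin.val_mk])]
    rw [hent, ← e1] at np
    exact np
  · have hv1 : v = 1 := Fin.ext hv
    subst hv1
    have e1 : embq (update q 1 Q) T = update (embq q T) ⟨1, by omega⟩ Q := by
      funext k
      rw [embq_apply]
      by_cases h0 : (k : ℕ) = 0
      · rw [if_pos h0, update_of_ne (by decide : (0 : Fin 2) ≠ 1),
          update_of_ne (fin_mk_ne (a := 1) (by omega) (by omega)), embq_apply, if_pos h0]
      · rw [if_neg h0]
        by_cases h1 : (k : ℕ) = 1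
        · rw [if_pos h1, update_self, fin_mk_eq (a := 1) h1 (by omega), update_self]
        · rw [if_neg h1, update_of_ne (fin_mk_ne (a := 1) h1 (by omega)), embq_apply,
            if_neg h0, if_neg h1]
    have np := hSP ⟨1, by omega⟩ (embq q T) Q
    have hent : embq q T ⟨1, by omega⟩ = q 1 := by
      rw [embq_apply, if_neg (by rw [Fin.val_mk]; omega), if_pos (by rw [Fin.val_mk])]
    rw [hent, ← e1] at np
    exact np

lemma embq_onto (hm : 2 ≤ m) (f : (Fin (m + 1) → Pref A) → A)
    (T : Fin (m + 1) → Pref A) (j : Fin m) (hjz : (j : ℕ) = 0)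
    (hj : ∀ P z, z ≠ clone hm f P → (P j).1 (clone hm f P) z) :
    Function.Surjective (fun q => f (embq q T)) := by
  intro x
  refine ⟨fun _ => mk1 x, ?_⟩
  show f (embq (fun _ => mk1 x) T) = x
  have hDc : (fun k => (fun t : Fin m =>
      if (t : ℕ) = 0 then mk1 x else T ⟨(t : ℕ) + 1, by omega⟩) (cl hm k)) =
      embq (fun _ => mk1 x) T := by
    funext k
    show (if ((cl hm k : Fin m) : ℕ) = 0 then mk1 x
        else T ⟨((cl hm k : Fin m) : ℕ) + 1, by omega⟩) = _
    rw [embq_apply]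
    by_cases h0 : (k : ℕ) ≤ 1
    · rw [if_pos (show ((cl hm k : Fin m) : ℕ) = 0 by rw [cl_val]; omega)]
      by_cases h00 : (k : ℕ) = 0
      · rw [if_pos h00]
      · rw [if_neg h00, if_pos (by omega)]
    · rw [if_neg (show ¬ ((cl hm k : Fin m) : ℕ) = 0 by rw [cl_val]; omega),
        if_neg (by omega), if_neg (by omega)]
      congr 1
      exact Fin.ext (by rw [Fin.val_mk, cl_val]; omega)
  have hgp : clone hm f (fun t : Fin m =>
      if (t : ℕ) = 0 then mk1 x else T ⟨(t : ℕ) + 1, by omega⟩) =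
      f (embq (fun _ => mk1 x) T) := congrArg f hDc
  have htopx : IsTop (mk1 x)
      (clone hm f (fun t : Fin m =>
        if (t : ℕ) = 0 then mk1 x else T ⟨(t : ℕ) + 1, by omega⟩)) := by
    intro w hw
    have h := hj (fun t : Fin m =>
      if (t : ℕ) = 0 then mk1 x else T ⟨(t : ℕ) + 1, by omega⟩) w hw
    have hPj : (fun t : Fin m =>
        if (t : ℕ) = 0 then mk1 x else T ⟨(t : ℕ) + 1, by omega⟩) j = mk1 x := by
      show (if (j : ℕ) = 0 then mk1 x else T ⟨(j : ℕ) + 1, by omega⟩) = _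
      rw [if_pos hjz]
    rwa [if_pos hjz] at h
  have := top_unique htopx (mk1_top x)
  rw [← hgp, this]

/-- voter `v ∈ {0,1}` of the embedded pair dictates at `T`. -/
def Dv (v : Fin 2) (f : (Fin (m + 1) → Pref A) → A) (T : Fin (m + 1) → Pref A) : Prop :=
  ∀ (q : Fin 2 → Pref A) (z : A), z ≠ f (embq q T) → (q v).1 (f (embq q T)) z

lemma embq_diagS (hm : 2 ≤ m) (S : Fin (m + 1) → Pref A) :
    embq (fun v : Fin 2 => if v = 0 then S ⟨0, by omega⟩ else S ⟨1, by omega⟩) S = S := by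
  funext k
  rw [embq_apply]
  by_cases h0 : (k : ℕ) = 0
  · rw [if_pos h0, if_pos rfl, fin_mk_eq (a := 0) h0 (by omega)]
  by_cases h1 : (k : ℕ) = 1
  · rw [if_neg h0, if_pos h1, if_neg (by decide : ¬ (1 : Fin 2) = 0),
      fin_mk_eq (a := 1) h1 (by omega)]
  · rw [if_neg h0, if_neg h1]

lemma gs_step_merge (hA : 3 ≤ Fintype.card A) (hm : 2 ≤ m)
    (f : (Fin (m + 1) → Pref A) → A) (hf : Function.Surjective f)
    (hSP : StrategyProof f) (j : Fin m) (hjz : (j : ℕ) = 0)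
    (hj : ∀ P z, z ≠ clone hm f P → (P j).1 (clone hm f P) z) : DictatorialSCF f := by
  have hne : Nonempty A := Fintype.card_pos_iff.mp (by omega)
  have hD01 : ∀ T, Dv 0 f T ∨ Dv 1 f T := by
    intro T
    obtain ⟨v, hv⟩ := gs_two hA (fun q => f (embq q T))
      (embq_onto hm f T j hjz hj) (embq_SP hm f hSP T)
    have hv2 : (v : ℕ) = 0 ∨ (v : ℕ) = 1 := by omega
    rcases hv2 with h | h
    · have : v = 0 := Fin.ext h
      subst this
      exact Or.inl hv
    · have : v = 1 := Fin.ext h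
      subst this
      exact Or.inr hv
  have hflip : ∀ T T', Dv 0 f T' → Dv 0 f T := by
    intro T T' hT'
    by_contra hT
    obtain ⟨s, hsN, hns, hps⟩ := exists_flip (fun s => Dv 0 f (mix T T' s)) (m + 1)
      (by show ¬ Dv 0 f (mix T T' 0); rw [mix_zero]; exact hT)
      (by show Dv 0 f (mix T T' (m + 1)); rw [mix_last]; exact hT')
    by_cases hs2 : s < 2
    · have hsame : ∀ q : Fin 2 → Pref A,
          embq q (mix T T' (s + 1)) = embq q (mix T T' s) := by
        intro q
        funext k
        rw [embq_apply, embq_apply]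
        by_cases h0 : (k : ℕ) = 0
        · rw [if_pos h0, if_pos h0]
        by_cases h1 : (k : ℕ) = 1
        · rw [if_neg h0, if_pos h1, if_neg h0, if_pos h1]
        · rw [if_neg h0, if_neg h1, if_neg h0, if_neg h1, mix_apply, mix_apply,
            if_neg (by omega), if_neg (by omega)]
      refine hns ?_
      intro q z hz
      have h := hps q z (by rw [hsame q]; exact hz)
      rwa [hsame q] at h
    · have hslt : s < m + 1 := by omega
      obtain ⟨y, hy⟩ := exists_top (T ⟨s, hslt⟩)
      obtain ⟨x, hxy, -⟩ := exists_third hA y y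
      have hD1s : Dv 1 f (mix T T' s) := (hD01 _).resolve_left hns
      have hvA : f (embq (fun v : Fin 2 => if v = 0 then mk1 y else mk1 x)
          (mix T T' s)) = x := by
        refine top_unique (P := mk1 x) ?_ (mk1_top x)
        intro w hw
        exact hD1s (fun v : Fin 2 => if v = 0 then mk1 y else mk1 x) w hw
      have hvB : f (embq (fun v : Fin 2 => if v = 0 then mk1 y else mk1 x)
          (mix T T' (s + 1))) = y := by
        refine top_unique (P := mk1 y) ?_ (mk1_top y)
        intro w hw
        exact hps (fun v : Fin 2 => if v = 0 then mk1 y else mk1 x) w hw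
      have hupd : embq (fun v : Fin 2 => if v = 0 then mk1 y else mk1 x)
          (mix T T' (s + 1)) =
          update (embq (fun v : Fin 2 => if v = 0 then mk1 y else mk1 x)
            (mix T T' s)) ⟨s, hslt⟩ (T' ⟨s, hslt⟩) := by
        funext k
        rw [embq_apply]
        by_cases h0 : (k : ℕ) = 0
        · rw [if_pos h0, update_of_ne (fin_mk_ne (a := s) (by omega) hslt),
            embq_apply, if_pos h0]
        by_cases h1 : (k : ℕ) = 1
        · rw [if_neg h0, if_pos h1, update_of_ne (fin_mk_ne (a := s) (by omega) hslt),
            embq_apply, if_neg h0, if_pos h1]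
        · rw [if_neg h0, if_neg h1]
          by_cases hks : (k : ℕ) = s
          · rw [fin_mk_eq (a := s) hks hslt, update_self, mix_apply,
              if_pos (show s < s + 1 by omega)]
          · rw [update_of_ne (fin_mk_ne (a := s) hks hslt), embq_apply,
              if_neg h0, if_neg h1, mix_apply, mix_apply]
            rcases Nat.lt_or_ge (k : ℕ) s with hlt | hge
            · rw [if_pos (show (k : ℕ) < s + 1 by omega), if_pos hlt]
            · rw [if_neg (show ¬ (k : ℕ) < s + 1 by omega),
                if_neg (show ¬ (k : ℕ) < s by omega)]
      have np := hSP ⟨s, hslt⟩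
        (embq (fun v : Fin 2 => if v = 0 then mk1 y else mk1 x) (mix T T' s))
        (T' ⟨s, hslt⟩)
      rw [← hupd, hvA, hvB] at np
      have hent : embq (fun v : Fin 2 => if v = 0 then mk1 y else mk1 x)
          (mix T T' s) ⟨s, hslt⟩ = T ⟨s, hslt⟩ := by
        rw [embq_apply, if_neg (show ¬ (s = 0) by omega),
          if_neg (show ¬ (s = 1) by omega), mix_apply,
          if_neg (show ¬ (s < s) by omega)]
      rw [hent] at np
      exact np (hy x hxy)
  by_cases hall : ∀ T, Dv 0 f T
  · refine ⟨⟨0, by omega⟩, ?_⟩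
    intro S z hz
    have h := hall S (fun v : Fin 2 => if v = 0 then S ⟨0, by omega⟩ else S ⟨1, by omega⟩)
      z (by rw [embq_diagS hm S]; exact hz)
    rw [embq_diagS hm S] at h
    exact h
  · push_neg at hall
    obtain ⟨T0, hT0⟩ := hall
    have hD1all : ∀ T, Dv 1 f T := by
      intro T
      refine (hD01 T).resolve_left ?_
      intro hD0T
      exact hT0 (hflip T0 T hD0T)
    refine ⟨⟨1, by omega⟩, ?_⟩
    intro S z hz
    have h := hD1all S (fun v : Fin 2 => if v = 0 then S ⟨0, by omega⟩ else S ⟨1, by omega⟩)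
      z (by rw [embq_diagS hm S]; exact hz)
    rw [embq_diagS hm S] at h
    exact h

end Merge
end GS
namespace GS
variable {A : Type*}

section Final
variable [Fintype A] [DecidableEq A]

lemma gs_step {m : ℕ} (hA : 3 ≤ Fintype.card A) (hm : 2 ≤ m)
    (IH : ∀ g : (Fin m → Pref A) → A, Function.Surjective g → StrategyProof g →
      DictatorialSCF g)
    (f : (Fin (m + 1) → Pref A) → A) (hf : Function.Surjective f)
    (hSP : StrategyProof f) : DictatorialSCF f := by
  obtain ⟨j, hj⟩ := IH (clone hm f) (clone_surj hm f hf hSP) (clone_SP hm f hSP)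
  by_cases hjz : (j : ℕ) = 0
  · exact gs_step_merge hA hm f hf hSP j hjz hj
  · exact gs_step_other hA hm f hf hSP j hjz hj

lemma gs_aux (hA : 3 ≤ Fintype.card A) :
    ∀ n (f : (Fin n → Pref A) → A), Function.Surjective f → StrategyProof f →
      DictatorialSCF f := by
  intro n
  induction n using Nat.strong_induction_on with
  | _ n ih =>
    match n with
    | 0 => exact fun f hf _ => gs_zero hA f hf
    | 1 => exact fun f hf hSP => gs_one hA f hf hSP
    | 2 => exact fun f hf hSP => gs_two hA f hf hSP
    | (m + 3) =>
      exact fun f hf hSP =>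
        gs_step hA (by omega : 2 ≤ m + 2) (ih (m + 2) (by omega)) f hf hSP

end Final
end GS

/-- **Gibbard–Satterthwaite Theorem.** -/
theorem gibbard_satterthwaite {A : Type*} [Fintype A] (hA : 3 ≤ Fintype.card A)
    {n : ℕ} (f : (Fin n → Pref A) → A)
    (honto : Function.Surjective f) (hSP : StrategyProof f) :
    DictatorialSCF f := by
  letI := Classical.decEq A
  exact GS.gs_aux hA n f honto hSP
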